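/- For even m ≥ 6, with β_m = binom(m,2), the coefficient of q^{β_m - 3} in d_m(q) equals m³/12 - m²/8 - m/12 - 1. -/
import Mathlib
open Polynomial

/-- The q-derangement polynomial, defined by the recursion
`d_n(q) = (1+q+⋯+q^{n-1}) d_{n-1}(q) + (-1)^n q^{C(n,2)}` for `n ≥ 2`, with `d_1(q) = 0`. -/
noncomputable def dq : ℕ → Polynomial ℤ
  | 0 => 0
  | 1 => 0
  | (n + 2) =>
      (∑ i ∈ Finset.range (n + 2), X ^ i) * dq (n + 1)
        + (-1) ^ (n + 2) * X ^ ((n + 2).choose 2)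

/-- `A n k` is the coefficient of `q^k` in `d_n(q)`. -/
noncomputable def A (n k : ℕ) : ℤ := (dq n).coeff k

lemma choose2_succ (n : ℕ) : (n+1).choose 2 = n.choose 2 + n := by
  rw [Nat.choose_succ_succ, Nat.choose_one_right, Nat.add_comm]

lemma dq_coeff (n k : ℕ) :
    (dq (n+2)).coeff k =
      (∑ i ∈ Finset.range (n+2), if i ≤ k then (dq (n+1)).coeff (k - i) else 0)
        + (-1)^(n+2) * (if (n+2).choose 2 = k then 1 else 0) := by
  rw [dq, coeff_add, Finset.sum_mul]
  congr 1
  · rw [finset_sum_coeff]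
    refine Finset.sum_congr rfl fun i _ => ?_
    rw [mul_comm, coeff_mul_X_pow']
  · rw [show ((-1:ℤ[X])^(n+2)) = C ((-1)^(n+2)) by simp, coeff_C_mul, coeff_X_pow]
    simp [eq_comm]

lemma dq_coeff_zero : ∀ (n k : ℕ), n.choose 2 < k → (dq n).coeff k = 0 := by
  intro n
  induction n with
  | zero => intro k _; simp [dq]
  | succ n ih =>
    cases n with
    | zero => intro k _; simp [dq]
    | succ m =>
      intro k hk
      have h2 : (m+1+1).choose 2 = (m+1).choose 2 + (m+1) := choose2_succ (m+1)
      have h2' : (m+2).choose 2 = (m+1).choose 2 + (m+1) := choose2_succ (m+1)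
      rw [dq_coeff, Finset.sum_eq_zero, if_neg (by omega), mul_zero, add_zero]
      intro i hi
      simp only [Finset.mem_range] at hi
      split
      · apply ih; omega
      · rfl

lemma b_ge (n : ℕ) : n + 3 ≤ (n+4).choose 2 := by
  rw [choose2_succ (n+3)]; omega

lemma rec3 (n : ℕ) :
    (dq (n+5)).coeff ((n+5).choose 2 - 3) =
      (dq (n+4)).coeff ((n+4).choose 2) + (dq (n+4)).coeff ((n+4).choose 2 - 1)
      + (dq (n+4)).coeff ((n+4).choose 2 - 2) + (dq (n+4)).coeff ((n+4).choose 2 - 3) := by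
  have h5 : (n+5).choose 2 = (n+4).choose 2 + (n+4) := choose2_succ (n+4)
  have hb : n + 3 ≤ (n+4).choose 2 := b_ge n
  rw [show n+5 = n+3+2 from rfl, dq_coeff]
  simp only [show n+3+1 = n+4 from rfl, show n+3+2 = n+5 from rfl]
  have hsub : ({n+1, n+2, n+3, n+4} : Finset ℕ) ⊆ Finset.range (n+5) := by
    intro x hx
    simp only [Finset.mem_insert, Finset.mem_singleton] at hx
    simp only [Finset.mem_range]; omega
  have hzero : ∀ i ∈ Finset.range (n+5), i ∉ ({n+1, n+2, n+3, n+4} : Finset ℕ) →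
      (if i ≤ (n+5).choose 2 - 3 then (dq (n+4)).coeff ((n+5).choose 2 - 3 - i) else 0) = 0 := by
    intro i hi hni
    simp only [Finset.mem_range] at hi
    simp only [Finset.mem_insert, Finset.mem_singleton, not_or] at hni
    split
    · apply dq_coeff_zero; omega
    · rfl
  rw [← Finset.sum_subset hsub hzero]
  rw [Finset.sum_insert (by simp), Finset.sum_insert (by simp),
    Finset.sum_insert (by simp), Finset.sum_singleton]
  rw [if_pos (by omega), if_pos (by omega), if_pos (by omega), if_pos (by omega),
    if_neg (by omega)]
  rw [show (n+5).choose 2 - 3 - (n+1) = (n+4).choose 2 from by omega,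
    show (n+5).choose 2 - 3 - (n+2) = (n+4).choose 2 - 1 from by omega,
    show (n+5).choose 2 - 3 - (n+3) = (n+4).choose 2 - 2 from by omega,
    show (n+5).choose 2 - 3 - (n+4) = (n+4).choose 2 - 3 from by omega]
  ring

lemma rec2 (n : ℕ) :
    (dq (n+5)).coeff ((n+5).choose 2 - 2) =
      (dq (n+4)).coeff ((n+4).choose 2) + (dq (n+4)).coeff ((n+4).choose 2 - 1)
      + (dq (n+4)).coeff ((n+4).choose 2 - 2) := by
  have h5 : (n+5).choose 2 = (n+4).choose 2 + (n+4) := choose2_succ (n+4)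
  have hb : n + 3 ≤ (n+4).choose 2 := b_ge n
  rw [show n+5 = n+3+2 from rfl, dq_coeff]
  simp only [show n+3+1 = n+4 from rfl, show n+3+2 = n+5 from rfl]
  have hsub : ({n+2, n+3, n+4} : Finset ℕ) ⊆ Finset.range (n+5) := by
    intro x hx
    simp only [Finset.mem_insert, Finset.mem_singleton] at hx
    simp only [Finset.mem_range]; omega
  have hzero : ∀ i ∈ Finset.range (n+5), i ∉ ({n+2, n+3, n+4} : Finset ℕ) →
      (if i ≤ (n+5).choose 2 - 2 then (dq (n+4)).coeff ((n+5).choose 2 - 2 - i) else 0) = 0 := by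
    intro i hi hni
    simp only [Finset.mem_range] at hi
    simp only [Finset.mem_insert, Finset.mem_singleton, not_or] at hni
    split
    · apply dq_coeff_zero; omega
    · rfl
  rw [← Finset.sum_subset hsub hzero]
  rw [Finset.sum_insert (by simp), Finset.sum_insert (by simp), Finset.sum_singleton]
  rw [if_pos (by omega), if_pos (by omega), if_pos (by omega), if_neg (by omega)]
  rw [show (n+5).choose 2 - 2 - (n+2) = (n+4).choose 2 from by omega,
    show (n+5).choose 2 - 2 - (n+3) = (n+4).choose 2 - 1 from by omega,
    show (n+5).choose 2 - 2 - (n+4) = (n+4).choose 2 - 2 from by omega]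
  ring

lemma rec1 (n : ℕ) :
    (dq (n+5)).coeff ((n+5).choose 2 - 1) =
      (dq (n+4)).coeff ((n+4).choose 2) + (dq (n+4)).coeff ((n+4).choose 2 - 1) := by
  have h5 : (n+5).choose 2 = (n+4).choose 2 + (n+4) := choose2_succ (n+4)
  have hb : n + 3 ≤ (n+4).choose 2 := b_ge n
  rw [show n+5 = n+3+2 from rfl, dq_coeff]
  simp only [show n+3+1 = n+4 from rfl, show n+3+2 = n+5 from rfl]
  have hsub : ({n+3, n+4} : Finset ℕ) ⊆ Finset.range (n+5) := by
    intro x hx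
    simp only [Finset.mem_insert, Finset.mem_singleton] at hx
    simp only [Finset.mem_range]; omega
  have hzero : ∀ i ∈ Finset.range (n+5), i ∉ ({n+3, n+4} : Finset ℕ) →
      (if i ≤ (n+5).choose 2 - 1 then (dq (n+4)).coeff ((n+5).choose 2 - 1 - i) else 0) = 0 := by
    intro i hi hni
    simp only [Finset.mem_range] at hi
    simp only [Finset.mem_insert, Finset.mem_singleton, not_or] at hni
    split
    · apply dq_coeff_zero; omega
    · rfl
  rw [← Finset.sum_subset hsub hzero]
  rw [Finset.sum_insert (by simp), Finset.sum_singleton]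
  rw [if_pos (by omega), if_pos (by omega), if_neg (by omega)]
  rw [show (n+5).choose 2 - 1 - (n+3) = (n+4).choose 2 from by omega,
    show (n+5).choose 2 - 1 - (n+4) = (n+4).choose 2 - 1 from by omega]
  ring

lemma rec0 (n : ℕ) :
    (dq (n+5)).coeff ((n+5).choose 2) =
      (dq (n+4)).coeff ((n+4).choose 2) + (-1)^(n+5) := by
  have h5 : (n+5).choose 2 = (n+4).choose 2 + (n+4) := choose2_succ (n+4)
  have hb : n + 3 ≤ (n+4).choose 2 := b_ge n
  rw [show n+5 = n+3+2 from rfl, dq_coeff]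
  simp only [show n+3+1 = n+4 from rfl, show n+3+2 = n+5 from rfl]
  have hsub : ({n+4} : Finset ℕ) ⊆ Finset.range (n+5) := by
    intro x hx
    simp only [Finset.mem_singleton] at hx
    simp only [Finset.mem_range]; omega
  have hzero : ∀ i ∈ Finset.range (n+5), i ∉ ({n+4} : Finset ℕ) →
      (if i ≤ (n+5).choose 2 then (dq (n+4)).coeff ((n+5).choose 2 - i) else 0) = 0 := by
    intro i hi hni
    simp only [Finset.mem_range] at hi
    simp only [Finset.mem_singleton] at hni
    split
    · apply dq_coeff_zero; omega
    · rfl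
  rw [← Finset.sum_subset hsub hzero]
  rw [Finset.sum_singleton]
  rw [if_pos (by omega), if_pos trivial]
  rw [show (n+5).choose 2 - (n+4) = (n+4).choose 2 from by omega]
  ring

lemma dq2 : dq 2 = X := by
  show dq (0+2) = X
  rw [dq]
  norm_num [Finset.sum_range_succ, dq]

lemma dq3 : dq 3 = X + X^2 := by
  show dq (1+2) = _
  rw [dq]
  norm_num [Finset.sum_range_succ, dq2]
  ring

lemma dq4 : dq 4 = X + 2*X^2 + 2*X^3 + 2*X^4 + X^5 + X^6 := by
  show dq (2+2) = _
  rw [dq]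
  norm_num [Finset.sum_range_succ, dq3, Nat.choose]
  ring

lemma dq5 : dq 5 = X + 3*X^2 + 5*X^3 + 7*X^4 + 8*X^5 + 8*X^6 + 6*X^7 + 4*X^8 + 2*X^9 := by
  show dq (3+2) = _
  rw [dq]
  norm_num [Finset.sum_range_succ, dq4, Nat.choose]
  ring

noncomputable def ee (n : ℕ) : ℚ := if Even n then 1 else 0

lemma key : ∀ n : ℕ, 5 ≤ n →
    ((dq n).coeff (n.choose 2) : ℚ) = ee n ∧
    ((dq n).coeff (n.choose 2 - 1) : ℚ) = ((n:ℚ) - 1 - ee n)/2 ∧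
    ((dq n).coeff (n.choose 2 - 2) : ℚ) = (n:ℚ)^2/4 - (n:ℚ)/2 + (1 - ee n)/4 ∧
    ((dq n).coeff (n.choose 2 - 3) : ℚ)
      = (n:ℚ)^3/12 - (n:ℚ)^2/8 - (n:ℚ)/12 - 1 + (1 - ee n)/8 := by
  intro n hn
  induction n, hn using Nat.le_induction with
  | base =>
    have h5 : Nat.choose 5 2 = 10 := by decide
    have : ee 5 = 0 := by simp [ee, Nat.even_iff]
    rw [h5, this, dq5]
    norm_num [coeff_add, coeff_X_pow, coeff_ofNat_mul, coeff_X]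
  | succ n hn ih =>
    obtain ⟨k, rfl⟩ : ∃ k, n = k + 5 := ⟨n - 5, by omega⟩
    obtain ⟨h0, h1, h2, h3⟩ := ih
    have R0 := rec0 (k+1)
    have R1 := rec1 (k+1)
    have R2 := rec2 (k+1)
    have R3 := rec3 (k+1)
    rw [show k+1+5 = k+5+1 by omega, show k+1+4 = k+5 by omega] at R0 R1 R2 R3
    rcases Nat.even_or_odd (k+5) with hpar | hpar
    · have he : ee (k+5) = 1 := by simp [ee, hpar]
      have he' : ee (k+5+1) = 0 := by
        simp [ee, Nat.even_add_one, hpar]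
      have hm1 : ((-1:ℤ))^(k+5+1) = -1 := Odd.neg_one_pow (by simp [Nat.even_add_one, hpar])
      rw [hm1] at R0
      rw [he] at h0 h1 h2 h3
      refine ⟨?_, ?_, ?_, ?_⟩ <;>
        [rw [R0]; rw [R1]; rw [R2]; rw [R3]] <;>
        push_cast <;> rw [he'] <;> push_cast at h0 h1 h2 h3 <;>
        rw [h0] <;> try rw [h1] <;> try rw [h2] <;> try rw [h3]
      all_goals try rw [h1]
      all_goals try rw [h2]
      all_goals try rw [h3]
      all_goals push_cast
      all_goals ring
    · have he : ee (k+5) = 0 := by simp [ee, Nat.odd_iff.mp hpar, Nat.even_iff]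
      have he' : ee (k+5+1) = 1 := by
        simp [ee, Nat.even_add_one, Nat.not_even_iff_odd.mpr hpar]
      have hm1 : ((-1:ℤ))^(k+5+1) = 1 := Even.neg_one_pow (by simp [Nat.even_add_one, Nat.not_even_iff_odd.mpr hpar])
      rw [hm1] at R0
      rw [he] at h0 h1 h2 h3
      refine ⟨?_, ?_, ?_, ?_⟩ <;>
        [rw [R0]; rw [R1]; rw [R2]; rw [R3]] <;>
        push_cast <;> rw [he']
      all_goals try rw [h0]
      all_goals try rw [h1]
      all_goals try rw [h2]
      all_goals try rw [h3]
      all_goals push_cast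
      all_goals ring

theorem stmt_12 (m : ℕ) (hm : 6 ≤ m) (he : Even m) :
    (A m (m.choose 2 - 3) : ℚ) =
      (m : ℚ) ^ 3 / 12 - (m : ℚ) ^ 2 / 8 - (m : ℚ) / 12 - 1 := by
  have h := (key m (by omega)).2.2.2
  have hee : ee m = 1 := by simp [ee, he]
  rw [A, h, hee]
  ring
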